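/- For every real q ≥ 1, the ratio of truncated Gaussian-weighted integrals satisfies (∫_q^∞ z⁴ e^{−z²/2} dz) / (∫_q^∞ e^{−z²/2} dz) ≤ 3 + 15q² + 5q⁴. -/

import Mathlib

open Set Real MeasureTheory Filter

/-- `x ^ n * exp (-x²/2)` is integrable on `(q, ∞)` for `q ≥ 0`. -/
lemma aux_integrable (n : ℕ) {q : ℝ} (hq : 0 ≤ q) :
    IntegrableOn (fun z : ℝ => z ^ n * Real.exp (-z ^ 2 / 2)) (Set.Ioi q) := by
  have h := integrableOn_rpow_mul_exp_neg_mul_sq (b := 1/2) (by norm_num)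
      (s := (n : ℝ)) (lt_of_lt_of_le (by norm_num) (Nat.cast_nonneg n))
  have h2 : IntegrableOn (fun z : ℝ => z ^ n * Real.exp (-z ^ 2 / 2)) (Set.Ioi 0) := by
    refine h.congr_fun (fun x _ => ?_) measurableSet_Ioi
    dsimp only; rw [Real.rpow_natCast]
    ring_nf
  exact h2.mono (Set.Ioi_subset_Ioi hq) le_rfl

lemma aux_tendsto (n : ℕ) :
    Tendsto (fun z : ℝ => z ^ n * Real.exp (-z ^ 2 / 2)) atTop (nhds 0) := by
  have hm : Tendsto (fun x : ℝ => -(1/2 : ℝ) * x) atTop atBot := by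
    have h0 : Tendsto (fun x : ℝ => (1/2 : ℝ) * x) atTop atTop := by
      exact Tendsto.const_mul_atTop (by norm_num) tendsto_id
    have := tendsto_neg_atTop_atBot.comp h0
    refine this.congr (fun x => ?_)
    simp [neg_mul]
  have hexp : Tendsto (fun x : ℝ => Real.exp (-(1/2 : ℝ) * x)) atTop (nhds 0) :=
    Real.tendsto_exp_atBot.comp hm
  have h := (rpow_mul_exp_neg_mul_sq_isLittleO_exp_neg (b := 1/2) (by norm_num)
      (n : ℝ)).trans_tendsto hexp
  refine h.congr' ?_
  filter_upwards [eventually_gt_atTop (0:ℝ)] with x hx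
  rw [Real.rpow_natCast]
  ring_nf

/-- FTC computation: `∫_q^∞ (z⁴ - 3) e^{-z²/2} = (q³+3q) e^{-q²/2}`. -/
lemma aux_ftc (q : ℝ) (hq : 0 ≤ q) :
    (∫ z in Set.Ioi q, (z ^ 4 - 3) * Real.exp (-z ^ 2 / 2))
      = (q ^ 3 + 3 * q) * Real.exp (-q ^ 2 / 2) := by
  have hderiv : ∀ x ∈ Set.Ici q, HasDerivAt
      (fun z : ℝ => -(z ^ 3 + 3 * z) * Real.exp (-z ^ 2 / 2))
      ((x ^ 4 - 3) * Real.exp (-x ^ 2 / 2)) x := by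
    intro x _
    have h1 : HasDerivAt (fun z : ℝ => -(z ^ 3 + 3 * z)) (-(3 * x ^ 2 + 3)) x := by
      have := ((hasDerivAt_pow 3 x).add ((hasDerivAt_id x).const_mul 3)).neg
      exact this.congr_deriv (by ring)
    have h2 : HasDerivAt (fun z : ℝ => Real.exp (-z ^ 2 / 2)) (-x * Real.exp (-x ^ 2 / 2)) x := by
      have hx : HasDerivAt (fun z : ℝ => -z ^ 2 / 2) (-x) x := by
        have := ((hasDerivAt_pow 2 x).neg).div_const 2
        exact this.congr_deriv (by ring)
      have := hx.exp
      convert this using 1; ring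
    have := h1.mul h2
    exact this.congr_deriv (by ring)
  have hint : IntegrableOn (fun z : ℝ => (z ^ 4 - 3) * Real.exp (-z ^ 2 / 2)) (Set.Ioi q) := by
    have h0 := (aux_integrable 4 hq).sub ((aux_integrable 0 hq).const_mul 3)
    refine h0.congr (Filter.Eventually.of_forall (fun x => ?_))
    simp [Pi.sub_apply]; ring
  have htend : Tendsto (fun z : ℝ => -(z ^ 3 + 3 * z) * Real.exp (-z ^ 2 / 2)) atTop (nhds 0) := by
    have h3 := aux_tendsto 3
    have h1 := aux_tendsto 1
    have := (h3.add (h1.const_mul 3)).neg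
    simp only [add_zero, neg_zero, mul_zero] at this
    refine this.congr (fun x => ?_)
    ring
  have := MeasureTheory.integral_Ioi_of_hasDerivAt_of_tendsto'
      hderiv hint htend
  rw [this]; ring

/-- Lower bound: `∫_q^∞ e^{-z²/2} ≥ q/(1+q²) e^{-q²/2}`. -/
lemma aux_lower (q : ℝ) (hq : 0 ≤ q) :
    q / (1 + q ^ 2) * Real.exp (-q ^ 2 / 2)
      ≤ ∫ z in Set.Ioi q, Real.exp (-z ^ 2 / 2) := by
  set g' : ℝ → ℝ := fun z => (1 - 2 / (1 + z ^ 2) ^ 2) * Real.exp (-z ^ 2 / 2) with hg'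
  have hpos : ∀ z : ℝ, (0:ℝ) < 1 + z ^ 2 := fun z => by positivity
  have hderiv : ∀ x ∈ Set.Ici q, HasDerivAt
      (fun z : ℝ => -(z / (1 + z ^ 2)) * Real.exp (-z ^ 2 / 2)) (g' x) x := by
    intro x _
    have h1 : HasDerivAt (fun z : ℝ => -(z / (1 + z ^ 2)))
        (-((1 - x ^ 2) / (1 + x ^ 2) ^ 2)) x := by
      have hd : HasDerivAt (fun z : ℝ => z / (1 + z ^ 2))
          ((1 * (1 + x ^ 2) - x * (2 * x)) / (1 + x ^ 2) ^ 2) x := by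
        have hnum : HasDerivAt (fun z : ℝ => z) 1 x := hasDerivAt_id x
        have hden : HasDerivAt (fun z : ℝ => 1 + z ^ 2) (2 * x) x := by
          have := (hasDerivAt_pow 2 x).const_add 1
          exact this.congr_deriv (by push_cast; ring)
        exact hnum.div hden (hpos x).ne'
      have := hd.neg
      exact this.congr_deriv (by ring)
    have h2 : HasDerivAt (fun z : ℝ => Real.exp (-z ^ 2 / 2)) (-x * Real.exp (-x ^ 2 / 2)) x := by
      have hx : HasDerivAt (fun z : ℝ => -z ^ 2 / 2) (-x) x := by
        have := ((hasDerivAt_pow 2 x).neg).div_const 2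
        exact this.congr_deriv (by ring)
      have := hx.exp
      convert this using 1; ring
    have := h1.mul h2
    refine this.congr_deriv ?_
    rw [hg']
    have h0 : (1 + x ^ 2) ^ 2 ≠ 0 := by positivity
    field_simp
    ring
  have hE : IntegrableOn (fun z : ℝ => Real.exp (-z ^ 2 / 2)) (Set.Ioi q) := by
    have := aux_integrable 0 hq
    simpa using this
  have hint : IntegrableOn g' (Set.Ioi q) := by
    refine Integrable.mono' hE ?_ ?_
    · apply Continuous.aestronglyMeasurable
      apply Continuous.mul
      · exact continuous_const.sub (continuous_const.div
          (by continuity) (fun z => by positivity))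
      · exact (Real.continuous_exp.comp (by continuity))
    · refine Filter.Eventually.of_forall (fun x => ?_)
      simp only [hg', Real.norm_eq_abs, abs_mul, abs_of_nonneg (Real.exp_pos _).le]
      have h1 : (0:ℝ) < (1 + x ^ 2) ^ 2 := by positivity
      have h2 : (1:ℝ) ≤ (1 + x ^ 2) ^ 2 := by nlinarith [sq_nonneg x]
      have : |1 - 2 / (1 + x ^ 2) ^ 2| ≤ 1 := by
        rw [abs_le]
        constructor
        · have : 2 / (1 + x ^ 2) ^ 2 ≤ 2 := by
            rw [div_le_iff₀ h1]; nlinarith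
          linarith
        · have : 0 ≤ 2 / (1 + x ^ 2) ^ 2 := by positivity
          linarith
      nlinarith [Real.exp_pos (-x ^ 2 / 2), this, abs_nonneg (1 - 2 / (1 + x ^ 2) ^ 2)]
  have htend : Tendsto (fun z : ℝ => -(z / (1 + z ^ 2)) * Real.exp (-z ^ 2 / 2))
      atTop (nhds 0) := by
    have h1 : Tendsto (fun z : ℝ => z / (1 + z ^ 2)) atTop (nhds 0) := by
      have hdivtop : Tendsto (fun z : ℝ => (1 + z ^ 2) / z) atTop atTop := by
        refine tendsto_atTop_mono' atTop ?_ tendsto_id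
        filter_upwards [eventually_gt_atTop (0:ℝ)] with x hx
        show x ≤ (1 + x ^ 2) / x
        rw [le_div_iff₀ hx]; nlinarith
      have := Filter.Tendsto.inv_tendsto_atTop hdivtop
      refine this.congr' ?_
      filter_upwards [eventually_gt_atTop (0:ℝ)] with x hx
      simp only [Pi.inv_apply, inv_div]
    have h2 : Tendsto (fun z : ℝ => Real.exp (-z ^ 2 / 2)) atTop (nhds 0) := by
      have := aux_tendsto 0
      simpa using this
    have := (h1.mul h2).neg
    simpa using this.congr (fun x => by ring)
  have heq := MeasureTheory.integral_Ioi_of_hasDerivAt_of_tendsto' hderiv hint htend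
  have hmono : (∫ z in Set.Ioi q, g' z) ≤ ∫ z in Set.Ioi q, Real.exp (-z ^ 2 / 2) := by
    refine setIntegral_mono_on hint hE measurableSet_Ioi (fun x _ => ?_)
    rw [hg']
    have h1 : 0 ≤ 2 / (1 + x ^ 2) ^ 2 := by positivity
    nlinarith [Real.exp_pos (-x ^ 2 / 2)]
  rw [heq] at hmono
  calc q / (1 + q ^ 2) * Real.exp (-q ^ 2 / 2)
      = 0 - -(q / (1 + q ^ 2)) * Real.exp (-q ^ 2 / 2) := by ring
    _ ≤ _ := hmono

/-- For every real `q ≥ 1`,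
`(∫_q^∞ z⁴ e^{−z²/2} dz) / (∫_q^∞ e^{−z²/2} dz) ≤ 3 + 15q² + 5q⁴`. -/
theorem stmt_12 (q : ℝ) (hq : 1 ≤ q) :
    (∫ z in Set.Ioi q, z ^ 4 * Real.exp (-z ^ 2 / 2))
        / (∫ z in Set.Ioi q, Real.exp (-z ^ 2 / 2))
      ≤ 3 + 15 * q ^ 2 + 5 * q ^ 4 := by
  have hq0 : (0:ℝ) ≤ q := by linarith
  set I := ∫ z in Set.Ioi q, Real.exp (-z ^ 2 / 2) with hI
  set J := ∫ z in Set.Ioi q, z ^ 4 * Real.exp (-z ^ 2 / 2) with hJ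
  have hE : IntegrableOn (fun z : ℝ => Real.exp (-z ^ 2 / 2)) (Set.Ioi q) := by
    simpa using aux_integrable 0 hq0
  have h4 : IntegrableOn (fun z : ℝ => z ^ 4 * Real.exp (-z ^ 2 / 2)) (Set.Ioi q) :=
    aux_integrable 4 hq0
  have hsplit : J - 3 * I = (q ^ 3 + 3 * q) * Real.exp (-q ^ 2 / 2) := by
    rw [← aux_ftc q hq0, hJ, hI]
    rw [← MeasureTheory.integral_const_mul, ← MeasureTheory.integral_sub h4 (hE.const_mul 3)]
    congr 1; funext z; ring
  have hlow := aux_lower q hq0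
  rw [← hI] at hlow
  have hIpos : 0 < I := by
    have h1 : 0 < q / (1 + q ^ 2) * Real.exp (-q ^ 2 / 2) := by
      have : (0:ℝ) < q := by linarith
      positivity
    linarith
  rw [div_le_iff₀ hIpos]
  have hEq : (0:ℝ) < Real.exp (-q ^ 2 / 2) := Real.exp_pos _
  have key : (q ^ 3 + 3 * q) * Real.exp (-q ^ 2 / 2)
      ≤ (15 * q ^ 2 + 5 * q ^ 4) * I := by
    have h1 : (q ^ 3 + 3 * q) * Real.exp (-q ^ 2 / 2)
        ≤ (15 * q ^ 2 + 5 * q ^ 4) * (q / (1 + q ^ 2) * Real.exp (-q ^ 2 / 2)) := by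
      have hden : (0:ℝ) < 1 + q ^ 2 := by positivity
      rw [show (15 * q ^ 2 + 5 * q ^ 4) * (q / (1 + q ^ 2) * Real.exp (-q ^ 2 / 2))
          = ((15 * q ^ 2 + 5 * q ^ 4) * q) * Real.exp (-q ^ 2 / 2) / (1 + q ^ 2) by ring,
        le_div_iff₀ hden]
      have hpoly : (q ^ 3 + 3 * q) * (1 + q ^ 2) ≤ (15 * q ^ 2 + 5 * q ^ 4) * q := by
        have h3 : q ≤ q ^ 3 := by nlinarith
        have h5 : q ^ 3 ≤ q ^ 5 := by nlinarith
        nlinarith [h3, h5]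
      nlinarith [mul_le_mul_of_nonneg_right hpoly hEq.le]
    refine h1.trans ?_
    apply mul_le_mul_of_nonneg_left hlow (by positivity)
  linarith
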